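/- In a symmetric monoidal category with terminal tensor unit I, given a state η : I → A ⊗ B and an effect ε : B ⊗ C → I, the composite (1_A ⊗ ε) ∘ (η ⊗ 1_C) : C → A (postselected teleportation) is disconnected: it equals ψ ∘ ⊤_C for some state ψ : I → A. Concretely, it equals ((1_A ⊗ ⊤_B)∘η) ∘ ⊤_C. -/
import Mathlib


open CategoryTheory MonoidalCategory

/-- With terminal tensor unit, postselected teleportation is disconnected. -/
theorem stmt5 {M : Type*} [Category M] [MonoidalCategory M] [SymmetricCategory M]
    (top : ∀ A : M, A ⟶ 𝟙_ M) (huniq : ∀ (A : M) (f : A ⟶ 𝟙_ M), f = top A)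
    {A B X : M} (η : 𝟙_ M ⟶ A ⊗ B) (ε : B ⊗ X ⟶ 𝟙_ M) :
    (λ_ X).inv ≫ (η ▷ X) ≫ (α_ A B X).hom ≫ (A ◁ ε) ≫ (ρ_ A).hom
      = top X ≫ (η ≫ (A ◁ top B) ≫ (ρ_ A).hom) := by
  have hε : ε = (top B ▷ X) ≫ (λ_ X).hom ≫ top X := by
    rw [huniq _ ε, huniq _ ((top B ▷ X) ≫ (λ_ X).hom ≫ top X)]
  have hX : (λ_ X).inv ≫ (𝟙_ M ◁ top X) ≫ (λ_ (𝟙_ M)).hom = top X := by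
    rw [huniq _ ((λ_ X).inv ≫ (𝟙_ M ◁ top X) ≫ (λ_ (𝟙_ M)).hom)]
  set ψ := η ≫ (A ◁ top B) ≫ (ρ_ A).hom with hψ
  rw [hε]
  simp only [MonoidalCategory.whiskerLeft_comp, Category.assoc]
  calc (λ_ X).inv ≫ η ▷ X ≫ (α_ A B X).hom ≫ A ◁ top B ▷ X ≫ A ◁ (λ_ X).hom ≫ A ◁ top X ≫ (ρ_ A).hom
      = (λ_ X).inv ≫ η ▷ X ≫ ((A ◁ top B) ▷ X) ≫ ((ρ_ A).hom ▷ X) ≫ A ◁ top X ≫ (ρ_ A).hom := by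
        rw [← associator_naturality_middle_assoc, triangle_assoc]
    _ = (λ_ X).inv ≫ (ψ ▷ X) ≫ A ◁ top X ≫ (ρ_ A).hom := by
        simp [hψ]
    _ = (λ_ X).inv ≫ (𝟙_ M ◁ top X) ≫ (ψ ▷ 𝟙_ M) ≫ (ρ_ A).hom := by
        rw [whisker_exchange_assoc]
    _ = ((λ_ X).inv ≫ 𝟙_ M ◁ top X ≫ (λ_ (𝟙_ M)).hom) ≫ ψ := by
        rw [rightUnitor_naturality]
        simp [unitors_equal]
    _ = top X ≫ ψ := by rw [hX]
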